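/- Let K and K̃ be positive semidefinite symmetric m×m real matrices with max_{i,j}|K_{ij} − K̃_{ij}| ≤ ε_K. Then for every vector w ∈ ℝᵐ with ‖w‖ ≤ 1, the vectors f = K^{1/2}w and f̃ = K̃^{1/2}w satisfy max_{j}|f_j − f̃_j| ≤ √(m·ε_K). -/

import Mathlib

open scoped ComplexOrder in
/-- The square root of a positive semidefinite matrix, as defined in Mathlib (Dec 2024). -/
noncomputable def Matrix.PosSemidef.sqrt {n : Type*} [Fintype n] [DecidableEq n] {𝕜 : Type*}
    [RCLike 𝕜] {A : Matrix n n 𝕜} (hA : A.PosSemidef) : Matrix n n 𝕜 :=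
  hA.1.eigenvectorUnitary.1 * Matrix.diagonal ((↑) ∘ (√·) ∘ hA.1.eigenvalues) *
  (star hA.1.eigenvectorUnitary : Matrix n n 𝕜)

namespace Matrix.PosSemidef

open scoped ComplexOrder in
lemma posSemidef_sqrt {n : Type*} [Fintype n] [DecidableEq n] {𝕜 : Type*}
    [RCLike 𝕜] {A : Matrix n n 𝕜} (hA : A.PosSemidef) : hA.sqrt.PosSemidef := by
  unfold Matrix.PosSemidef.sqrt
  rw [Matrix.star_eq_conjTranspose]
  apply Matrix.PosSemidef.mul_mul_conjTranspose_same
  refine Matrix.posSemidef_diagonal_iff.mpr fun i ↦ ?_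
  simp only [Function.comp_apply]
  exact_mod_cast Real.sqrt_nonneg _

open scoped ComplexOrder in
lemma sqrt_mul_self {n : Type*} [Fintype n] [DecidableEq n] {𝕜 : Type*}
    [RCLike 𝕜] {A : Matrix n n 𝕜} (hA : A.PosSemidef) : hA.sqrt * hA.sqrt = A := by
  have hU : (star hA.1.eigenvectorUnitary : Matrix n n 𝕜) * hA.1.eigenvectorUnitary.1 = 1 :=
    Unitary.coe_star_mul_self _
  have hD : Matrix.diagonal ((↑) ∘ (√·) ∘ hA.1.eigenvalues : n → 𝕜) *
      Matrix.diagonal ((↑) ∘ (√·) ∘ hA.1.eigenvalues) =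
      Matrix.diagonal (RCLike.ofReal ∘ hA.1.eigenvalues) := by
    rw [Matrix.diagonal_mul_diagonal]
    congr 1
    funext i
    simp only [Function.comp_apply]
    rw [← RCLike.ofReal_mul, Real.mul_self_sqrt (hA.eigenvalues_nonneg i)]
  unfold Matrix.PosSemidef.sqrt
  conv_rhs => rw [hA.1.spectral_theorem, Unitary.conjStarAlgAut_apply]
  calc _ = hA.1.eigenvectorUnitary.1 * Matrix.diagonal ((↑) ∘ (√·) ∘ hA.1.eigenvalues) *
        ((star hA.1.eigenvectorUnitary : Matrix n n 𝕜) * hA.1.eigenvectorUnitary.1) *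
        Matrix.diagonal ((↑) ∘ (√·) ∘ hA.1.eigenvalues) *
        (star hA.1.eigenvectorUnitary : Matrix n n 𝕜) := by simp only [Matrix.mul_assoc]
    _ = _ := by rw [hU, Matrix.mul_one, Matrix.mul_assoc, Matrix.mul_assoc,
      ← Matrix.mul_assoc (Matrix.diagonal _), hD, ← Matrix.mul_assoc]

end Matrix.PosSemidef

open Matrix Finset

/-- Orthonormality of the rows: `∑ j, b i j * b i' j = δ_{i i'}`. -/
lemma aux_onb_ortho {m : ℕ} (b : OrthonormalBasis (Fin m) ℝ (EuclideanSpace ℝ (Fin m)))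
    (i i' : Fin m) : ∑ j, b i j * b i' j = if i = i' then 1 else 0 := by
  have h := orthonormal_iff_ite.mp b.orthonormal i i'
  simpa [PiLp.inner_apply, RCLike.inner_apply, starRingEnd_apply, mul_comm] using h

/-- Parseval for expansions in an orthonormal basis. -/
lemma aux_sum_sq_expansion {m : ℕ} (b : OrthonormalBasis (Fin m) ℝ (EuclideanSpace ℝ (Fin m)))
    (d : Fin m → ℝ) : ∑ j, (∑ i, d i * b i j) ^ 2 = ∑ i, d i ^ 2 := by
  calc ∑ j, (∑ i, d i * b i j) ^ 2
      = ∑ j, ∑ i, ∑ i', (d i * d i') * (b i j * b i' j) := by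
        refine Finset.sum_congr rfl fun j _ => ?_
        rw [sq, Finset.sum_mul_sum]
        exact Finset.sum_congr rfl fun i _ =>
          Finset.sum_congr rfl fun i' _ => by ring
    _ = ∑ i, ∑ i', (d i * d i') * ∑ j, b i j * b i' j := by
        rw [Finset.sum_comm]
        refine Finset.sum_congr rfl fun i _ => ?_
        rw [Finset.sum_comm]
        exact Finset.sum_congr rfl fun i' _ => (Finset.mul_sum _ _ _).symm
    _ = ∑ i, d i ^ 2 := by
        simp_rw [aux_onb_ortho b]
        refine Finset.sum_congr rfl fun i _ => ?_
        simp [sq]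

/-- Quadratic-form bound from an entrywise bound. -/
lemma aux_quad_bound {m : ℕ} (M : Matrix (Fin m) (Fin m) ℝ) (ε : ℝ)
    (hM : ∀ i j, |M i j| ≤ ε) (v : Fin m → ℝ) (hv : ∑ i, v i ^ 2 ≤ 1) (hε : 0 ≤ ε) :
    v ⬝ᵥ (M *ᵥ v) ≤ m * ε := by
  have h1 : v ⬝ᵥ (M *ᵥ v) ≤ ∑ i, ∑ j, |v i| * |v j| * ε := by
    rw [dotProduct]
    refine Finset.sum_le_sum fun i _ => ?_
    have hexp : v i * (M *ᵥ v) i = ∑ j, v i * (M i j * v j) := by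
      simp [Matrix.mulVec, dotProduct, Finset.mul_sum]
    rw [hexp]
    refine Finset.sum_le_sum fun j _ => ?_
    calc v i * (M i j * v j) ≤ |v i * (M i j * v j)| := le_abs_self _
      _ = |v i| * |M i j| * |v j| := by rw [abs_mul, abs_mul]; ring
      _ ≤ |v i| * ε * |v j| := by gcongr; exact hM i j
      _ = |v i| * |v j| * ε := by ring
  have h2 : ∑ i, ∑ j, |v i| * |v j| * ε = (∑ i, |v i|) ^ 2 * ε := by
    rw [sq, Finset.sum_mul_sum]
    simp [Finset.sum_mul]
  have h3 : (∑ i, |v i|) ^ 2 ≤ (m : ℝ) * ∑ i, v i ^ 2 := by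
    have := sq_sum_le_card_mul_sum_sq (s := (Finset.univ : Finset (Fin m)))
      (f := fun i => |v i|)
    simpa [sq_abs] using this
  calc v ⬝ᵥ (M *ᵥ v) ≤ (∑ i, |v i|) ^ 2 * ε := by rw [← h2]; exact h1
    _ ≤ ((m : ℝ) * ∑ i, v i ^ 2) * ε := by gcongr
    _ ≤ (m : ℝ) * 1 * ε := by gcongr
    _ = m * ε := by ring

set_option maxHeartbeats 1000000 in
/-- If `K`, `K̃` are PSD symmetric `m × m` matrices with entrywise difference at most `εK`,
then for any unit vector `w`, the vectors `K^{1/2} w` and `K̃^{1/2} w` differ by at most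
`√(m εK)` in every coordinate. -/
theorem sqrt_mulVec_entrywise_close {m : ℕ} (K K' : Matrix (Fin m) (Fin m) ℝ)
    (hK : K.PosSemidef) (hK' : K'.PosSemidef) (εK : ℝ)
    (hclose : ∀ i j, |K i j - K' i j| ≤ εK)
    (w : Fin m → ℝ) (hw : ∑ i, (w i) ^ 2 ≤ 1) :
    ∀ j, |(hK.sqrt.mulVec w) j - (hK'.sqrt.mulVec w) j| ≤ Real.sqrt (m * εK) := by
  rcases Nat.eq_zero_or_pos m with hm | hm
  · subst hm; exact fun j => j.elim0
  have hε : 0 ≤ εK := le_trans (abs_nonneg _) (hclose ⟨0, hm⟩ ⟨0, hm⟩)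
  set A := hK.sqrt with hA
  set B := hK'.sqrt with hB
  set D := A - B with hDdef
  have hDh : D.IsHermitian := hK.posSemidef_sqrt.1.sub hK'.posSemidef_sqrt.1
  set b := hDh.eigenvectorBasis with hb
  set lam := hDh.eigenvalues with hlam
  -- each eigenvector is normalized
  have hnorm : ∀ i, ∑ j, (b i j) ^ 2 = 1 := by
    intro i
    simpa [pow_two] using aux_onb_ortho b i i
  -- eigenvalue bound
  have heig : ∀ i, (lam i) ^ 2 ≤ m * εK := by
    intro i
    set v : Fin m → ℝ := ⇑(b i) with hv
    have hDv : D *ᵥ v = lam i • v := hDh.mulVec_eigenvectorBasis i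
    have hvv : v ⬝ᵥ v = 1 := by
      simpa [dotProduct, pow_two, hv] using hnorm i
    set a := A *ᵥ v with ha
    set c := B *ᵥ v with hc
    have hab : a - c = lam i • v := by
      rw [ha, hc, ← sub_mulVec]; exact hDv
    -- symmetric matrix dot product switch
    have hsymm : ∀ (M : Matrix (Fin m) (Fin m) ℝ), M.IsHermitian →
        ∀ x y : Fin m → ℝ, x ⬝ᵥ (M *ᵥ y) = (M *ᵥ x) ⬝ᵥ y := by
      intro M hM x y
      have hMt : Mᵀ = M :=
        Matrix.ext fun i j => by simpa using congrFun (congrFun hM.eq i) j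
      rw [dotProduct_mulVec, ← mulVec_transpose, hMt]
    have hKdot : v ⬝ᵥ (K *ᵥ v) = a ⬝ᵥ a := by
      rw [← hK.sqrt_mul_self, ← mulVec_mulVec, hsymm A hK.posSemidef_sqrt.1]
    have hK'dot : v ⬝ᵥ (K' *ᵥ v) = c ⬝ᵥ c := by
      rw [← hK'.sqrt_mul_self, ← mulVec_mulVec, hsymm B hK'.posSemidef_sqrt.1]
    have hcv : 0 ≤ v ⬝ᵥ c := by
      rw [hc]; simpa using hK'.posSemidef_sqrt.dotProduct_mulVec_nonneg v
    have hav : 0 ≤ v ⬝ᵥ a := by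
      rw [ha]; simpa using hK.posSemidef_sqrt.dotProduct_mulVec_nonneg v
    have hvsum : ∑ j, v j ^ 2 ≤ 1 := le_of_eq (hnorm i)
    rcases le_or_gt 0 (lam i) with hl | hl
    · -- use K - K'
      have key : v ⬝ᵥ ((K - K') *ᵥ v) = 2 * lam i * (v ⬝ᵥ c) + (lam i) ^ 2 := by
        rw [sub_mulVec, dotProduct_sub, hKdot, hK'dot]
        have : a = c + lam i • v := by rw [← hab]; abel
        rw [this]
        simp only [dotProduct_add, add_dotProduct, dotProduct_smul, smul_dotProduct,
          smul_eq_mul, hvv]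
        rw [dotProduct_comm c v]
        ring
      have hbound := aux_quad_bound (K - K') εK (by simpa using hclose) v hvsum hε
      nlinarith [mul_nonneg hl hcv]
    · -- use K' - K
      have key : v ⬝ᵥ ((K' - K) *ᵥ v) = (lam i) ^ 2 - 2 * lam i * (v ⬝ᵥ a) := by
        rw [sub_mulVec, dotProduct_sub, hKdot, hK'dot]
        have : c = a - lam i • v := by rw [← hab]; abel
        rw [this]
        simp only [dotProduct_sub, sub_dotProduct, dotProduct_smul, smul_dotProduct,
          smul_eq_mul, hvv]
        rw [dotProduct_comm a v]
        ring
      have hclose' : ∀ i j, |(K' - K) i j| ≤ εK := by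
        intro i j
        rw [Matrix.sub_apply, abs_sub_comm]
        simpa using hclose i j
      have hbound := aux_quad_bound (K' - K) εK hclose' v hvsum hε
      nlinarith [mul_nonneg (le_of_lt (neg_pos.mpr hl)) hav]
  -- expansion of w in the eigenbasis
  set c : Fin m → ℝ := fun i => ∑ k, b i k * w k with hcdef
  have hcol : ∀ k l, ∑ i, b i k * b i l = if k = l then 1 else 0 := by
    intro k l
    have h1 : (hDh.eigenvectorUnitary : Matrix (Fin m) (Fin m) ℝ) *
        star (hDh.eigenvectorUnitary : Matrix (Fin m) (Fin m) ℝ) = 1 :=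
      (Unitary.mem_iff.mp hDh.eigenvectorUnitary.2).2
    have h2 := congrFun (congrFun h1 k) l
    simp only [Matrix.mul_apply, Matrix.star_apply, star_trivial,
      Matrix.IsHermitian.eigenvectorUnitary_apply, Matrix.one_apply] at h2
    exact h2
  have hwexp : ∀ k, w k = ∑ i, c i * b i k := by
    intro k
    calc w k = ∑ l, w l * (if k = l then 1 else 0) := by simp
      _ = ∑ l, w l * ∑ i, b i k * b i l := by simp_rw [hcol]
      _ = ∑ l, ∑ i, (b i l * w l) * b i k := by
          refine Finset.sum_congr rfl fun l _ => ?_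
          rw [Finset.mul_sum]
          exact Finset.sum_congr rfl fun i _ => by ring
      _ = ∑ i, ∑ l, (b i l * w l) * b i k := Finset.sum_comm
      _ = ∑ i, c i * b i k := by
          refine Finset.sum_congr rfl fun i _ => ?_
          rw [hcdef, ← Finset.sum_mul]
  -- coordinates of D *ᵥ w
  have hDw : ∀ j, (D *ᵥ w) j = ∑ i, (lam i * c i) * b i j := by
    intro j
    have : (D *ᵥ w) j = ∑ k, D j k * w k := rfl
    rw [this]
    calc ∑ k, D j k * w k = ∑ k, D j k * ∑ i, c i * b i k := by
          simp_rw [← hwexp]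
      _ = ∑ k, ∑ i, c i * (D j k * b i k) := by
          apply Finset.sum_congr rfl; intro k _
          rw [Finset.mul_sum]
          apply Finset.sum_congr rfl; intro i _; ring
      _ = ∑ i, ∑ k, c i * (D j k * b i k) := Finset.sum_comm
      _ = ∑ i, c i * (D *ᵥ ⇑(b i)) j := by
          refine Finset.sum_congr rfl fun i _ => ?_
          simp [Matrix.mulVec, dotProduct, Finset.mul_sum]
      _ = ∑ i, (lam i * c i) * b i j := by
          apply Finset.sum_congr rfl; intro i _
          rw [hDh.mulVec_eigenvectorBasis i]
          simp [mul_comm, mul_assoc, mul_left_comm, hlam, hb]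
  -- Parseval for w
  have hcsum : ∑ i, c i ^ 2 ≤ 1 := by
    have := aux_sum_sq_expansion b c
    rw [← this]
    calc ∑ j, (∑ i, c i * b i j) ^ 2 = ∑ j, (w j) ^ 2 := by
          apply Finset.sum_congr rfl; intro j _
          rw [← hwexp j]
      _ ≤ 1 := hw
  -- sum of squares bound
  have hsumsq : ∑ j, ((D *ᵥ w) j) ^ 2 ≤ m * εK := by
    calc ∑ j, ((D *ᵥ w) j) ^ 2 = ∑ j, (∑ i, (lam i * c i) * b i j) ^ 2 := by
          simp_rw [hDw]
      _ = ∑ i, (lam i * c i) ^ 2 := aux_sum_sq_expansion b _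
      _ = ∑ i, (lam i) ^ 2 * (c i) ^ 2 := by simp_rw [mul_pow]
      _ ≤ ∑ i, (m * εK) * (c i) ^ 2 := by
          apply Finset.sum_le_sum; intro i _
          exact mul_le_mul_of_nonneg_right (heig i) (sq_nonneg _)
      _ = (m * εK) * ∑ i, (c i) ^ 2 := by rw [Finset.mul_sum]
      _ ≤ (m * εK) * 1 := by
          apply mul_le_mul_of_nonneg_left hcsum
          positivity
      _ = m * εK := mul_one _
  intro j
  have h1 : ((D *ᵥ w) j) ^ 2 ≤ m * εK := by
    calc ((D *ᵥ w) j) ^ 2 ≤ ∑ j', ((D *ᵥ w) j') ^ 2 :=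
          Finset.single_le_sum (f := fun j' => ((D *ᵥ w) j') ^ 2)
            (fun i _ => sq_nonneg _) (Finset.mem_univ j)
      _ ≤ m * εK := hsumsq
  have h2 : (hK.sqrt.mulVec w) j - (hK'.sqrt.mulVec w) j = (D *ᵥ w) j := by
    rw [hDdef, sub_mulVec]; rfl
  rw [h2, ← Real.sqrt_sq_eq_abs]
  exact Real.sqrt_le_sqrt h1
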